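/- Let A be a complex affine Poisson algebra (a finitely generated integral domain ℂ-algebra with a Poisson bracket) of Krull dimension d, and suppose the Poisson bracket is not identically zero. Then the intersection of all Poisson prime ideals of A of height at least d − 1 is a nonzero ideal. In fact, every Poisson prime ideal of height at least d − 1 contains {a,b} for all a, b ∈ A. -/

import Mathlib

/-- A Poisson bracket on a commutative `k`-algebra `A`: a `k`-bilinear map which is
antisymmetric, satisfies the Jacobi identity, and the Leibniz rule. -/
structure PoissonBracket (k A : Type*) [CommRing k] [CommRing A] [Algebra k A] where
  br : A →ₗ[k] A →ₗ[k] A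
  antisymm : ∀ a b : A, br a b = - br b a
  jacobi : ∀ a b c : A, br a (br b c) + br c (br a b) + br b (br c a) = 0
  leibniz : ∀ a b c : A, br (a * b) c = a * br b c + b * br a c

/-- An ideal `I` is a Poisson ideal if `{I, A} ⊆ I`. -/
def PoissonBracket.IsPoissonIdeal {k A : Type*} [CommRing k] [CommRing A] [Algebra k A]
    (pb : PoissonBracket k A) (I : Ideal A) : Prop :=
  ∀ a ∈ I, ∀ b : A, pb.br a b ∈ I

/-- The height of an ideal `P`: the supremum of lengths `n` of chains of prime ideals
`P₀ ⊊ P₁ ⊊ ⋯ ⊊ Pₙ = P`, computed as the chain height of the set of primes strictly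
below `P`. -/
noncomputable def idealHeight {A : Type*} [CommRing A] (P : Ideal A) : ℕ∞ :=
  Set.chainHeight {Q : Ideal A | Q.IsPrime ∧ Q < P} (· < ·)

open Polynomial


noncomputable def pbDer {A : Type*} [CommRing A] [Algebra ℂ A] (pb : PoissonBracket ℂ A)
    (a : A) : Derivation ℂ A A where
  __ := pb.br a
  map_one_eq_zero' := by
    have h := pb.leibniz 1 1 a
    rw [one_mul, one_mul] at h
    have h1 : pb.br (1 : A) a = 0 := by
      have := add_eq_right.mp h.symm
      exact this
    show pb.br a 1 = 0
    rw [pb.antisymm a 1, h1, neg_zero]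
  leibniz' := fun x y => by
    show pb.br a (x * y) = x • pb.br a y + y • pb.br a x
    simp only [smul_eq_mul]
    rw [pb.antisymm a (x * y), pb.leibniz, pb.antisymm y a, pb.antisymm x a]
    ring

lemma pbDer_apply {A : Type*} [CommRing A] [Algebra ℂ A] (pb : PoissonBracket ℂ A)
    (a x : A) : pbDer pb a x = pb.br a x := rfl

lemma pb_br_self {A : Type*} [CommRing A] [Algebra ℂ A] (pb : PoissonBracket ℂ A)
    (a : A) : pb.br a a = 0 := by
  have h := pb.antisymm a a
  have h2 : (2 : ℂ) • pb.br a a = 0 := by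
    rw [two_smul]
    nth_rewrite 1 [h]
    ring
  rcases smul_eq_zero.mp h2 with h' | h'
  · exact absurd h' two_ne_zero
  · exact h'

open Polynomial in
lemma one_var {A : Type*} [CommRing A] [Algebra ℂ A] (pb : PoissonBracket ℂ A)
    (P : Ideal A) (hP : P.IsPrime) (hpi : pb.IsPoissonIdeal P) (a b : A)
    (hab : pb.br a b ∉ P) :
    ∀ n : ℕ, ∀ q : Polynomial ℂ, q.natDegree ≤ n → q ≠ 0 → aeval a q ∈ P → False := by
  intro n
  induction n with
  | zero =>
    intro q hdeg hq0 hmem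
    rw [Nat.le_zero] at hdeg
    rw [Polynomial.eq_C_of_natDegree_eq_zero hdeg] at hmem
    have hc : q.coeff 0 ≠ 0 := fun h => hq0 (by
      rw [Polynomial.eq_C_of_natDegree_eq_zero hdeg, h, map_zero])
    rw [aeval_C] at hmem
    exact hP.ne_top (P.eq_top_of_isUnit_mem hmem ((algebraMap ℂ A).isUnit_map hc.isUnit))
  | succ n ih =>
    intro q hdeg hq0 hmem
    by_cases h0 : q.natDegree = 0
    · exact ih q (h0 ▸ Nat.zero_le n) hq0 hmem
    -- derivative step
    have hD : pb.br (aeval a q) b ∈ P := hpi _ hmem b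
    have hchain : pb.br b (aeval a q) = aeval a (derivative q) * pb.br b a := by
      have := (pbDer pb b).map_aeval q a
      rw [pbDer_apply, pbDer_apply, smul_eq_mul] at this
      exact this
    have hmem2 : aeval a (derivative q) * pb.br a b ∈ P := by
      have h1 : pb.br b (aeval a q) ∈ P := by
        rw [pb.antisymm b (aeval a q)]
        exact P.neg_mem hD
      rw [hchain, pb.antisymm b a] at h1
      have := P.neg_mem h1
      simpa using this
    rcases hP.mem_or_mem hmem2 with h | h
    · have hd0 : derivative q ≠ 0 := fun hz =>
        h0 (Polynomial.natDegree_eq_zero_of_derivative_eq_zero hz)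
      have hlt : (derivative q).natDegree < q.natDegree :=
        Polynomial.natDegree_derivative_lt h0
      exact ih (derivative q) (by omega) hd0 h
    · exact hab h

open Polynomial in
lemma derivation_eval₂ {A : Type*} [CommRing A] [Algebra ℂ A] (D : Derivation ℂ A A)
    (a b : A) (hDa : D a = 0) (p : Polynomial (Polynomial ℂ)) :
    D (eval₂ (aeval a : Polynomial ℂ →ₐ[ℂ] A).toRingHom b p) =
      eval₂ (aeval a : Polynomial ℂ →ₐ[ℂ] A).toRingHom b (derivative p) * D b := by
  induction p using Polynomial.induction_on with
  | C q =>
    simp only [eval₂_C, AlgHom.toRingHom_eq_coe, RingHom.coe_coe, derivative_C, eval₂_zero,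
      zero_mul]
    rw [D.map_aeval, hDa, smul_zero]
  | add p q hp hq =>
    simp only [eval₂_add, map_add, derivative_add, hp, hq]
    ring
  | monomial n q hp =>
    simp only [eval₂_mul, eval₂_C, eval₂_pow, eval₂_X, AlgHom.toRingHom_eq_coe, RingHom.coe_coe,
      derivative_mul, derivative_C, zero_mul, zero_add, derivative_pow, derivative_X, mul_one]
    rw [D.leibniz, D.leibniz_pow]
    rw [D.map_aeval, hDa, smul_zero, smul_zero, add_zero]
    simp only [smul_eq_mul, nsmul_eq_mul]
    rw [map_natCast]
    ring

open Polynomial in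
lemma two_var {A : Type*} [CommRing A] [Algebra ℂ A] (pb : PoissonBracket ℂ A)
    (P : Ideal A) (hP : P.IsPrime) (hpi : pb.IsPoissonIdeal P) (a b : A)
    (hab : pb.br a b ∉ P) :
    ∀ n : ℕ, ∀ p : Polynomial (Polynomial ℂ), p.natDegree ≤ n → p ≠ 0 →
      eval₂ (aeval a : Polynomial ℂ →ₐ[ℂ] A).toRingHom b p ∈ P → False := by
  intro n
  induction n with
  | zero =>
    intro p hdeg hp0 hmem
    rw [Nat.le_zero] at hdeg
    rw [Polynomial.eq_C_of_natDegree_eq_zero hdeg, eval₂_C] at hmem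
    have hc : p.coeff 0 ≠ 0 := fun h => hp0 (by
      rw [Polynomial.eq_C_of_natDegree_eq_zero hdeg, h, map_zero])
    exact one_var pb P hP hpi a b hab (p.coeff 0).natDegree (p.coeff 0) le_rfl hc hmem
  | succ n ih =>
    intro p hdeg hp0 hmem
    by_cases h0 : p.natDegree = 0
    · exact ih p (h0 ▸ Nat.zero_le n) hp0 hmem
    have hD : pb.br (eval₂ (aeval a : Polynomial ℂ →ₐ[ℂ] A).toRingHom b p) a ∈ P := hpi _ hmem a
    have hchain := derivation_eval₂ (pbDer pb a) a b (pb_br_self pb a) p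
    rw [pbDer_apply, pbDer_apply] at hchain
    have hmem2 : eval₂ (aeval a : Polynomial ℂ →ₐ[ℂ] A).toRingHom b (derivative p)
        * pb.br a b ∈ P := by
      rw [← hchain, pb.antisymm a _]
      exact P.neg_mem hD
    rcases hP.mem_or_mem hmem2 with h | h
    · have hd0 : derivative p ≠ 0 := fun hz =>
        h0 (Polynomial.natDegree_eq_zero_of_derivative_eq_zero hz)
      have hlt : (derivative p).natDegree < p.natDegree :=
        Polynomial.natDegree_derivative_lt h0
      exact ih (derivative p) (by omega) hd0 h
    · exact hab h

set_option maxHeartbeats 1600000 in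
open Polynomial in
lemma exists_chain_of_indep {B : Type*} [CommRing B] [IsDomain B] [Algebra ℂ B]
    (hfg : Algebra.FiniteType ℂ B) (x y : B)
    (hind : ∀ p : Polynomial (Polynomial ℂ), p ≠ 0 →
      eval₂ (aeval x : Polynomial ℂ →ₐ[ℂ] B).toRingHom y p ≠ 0) :
    ∃ Q1 Q2 : Ideal B, Q1.IsPrime ∧ Q2.IsPrime ∧ ⊥ < Q1 ∧ Q1 < Q2 := by
  classical
  set φ : Polynomial ℂ →ₐ[ℂ] B := aeval x with hφ
  have hφinj : ∀ q : Polynomial ℂ, q ≠ 0 → φ q ≠ 0 := by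
    intro q hq
    have := hind (C q) (by simpa using hq)
    simpa using this
  set S : Submonoid B := (nonZeroDivisors (Polynomial ℂ)).map φ.toRingHom.toMonoidHom with hS
  have hSle : S ≤ nonZeroDivisors B := by
    rintro _ ⟨q, hq, rfl⟩
    exact mem_nonZeroDivisors_of_ne_zero
      (hφinj q (mem_nonZeroDivisors_iff_ne_zero.mp hq))
  set B' := Localization S with hB'
  haveI : IsDomain B' := IsLocalization.isDomain_localization hSle
  have hinj : Function.Injective (algebraMap B B') := IsLocalization.injective B' hSle
  -- B' is not a field
  have hnf : ¬ IsField B' := by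
    intro hF
    letI : Field B' := hF.toField
    set K := FractionRing (Polynomial ℂ) with hK
    set ψ : Polynomial ℂ →+* B' := (algebraMap B B').comp φ.toRingHom with hψ
    have hψu : ∀ s : nonZeroDivisors (Polynomial ℂ), IsUnit (ψ s) := by
      intro s
      exact IsLocalization.map_units B' (⟨φ s, ⟨(s : Polynomial ℂ), s.2, rfl⟩⟩ : S)
    set χ : K →+* B' := IsLocalization.lift (S := K) hψu with hχ
    letI algK : Algebra K B' := χ.toAlgebra
    letI algP : Algebra (Polynomial ℂ) B' := ψ.toAlgebra
    haveI : IsScalarTower (Polynomial ℂ) K B' :=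
      IsScalarTower.of_algebraMap_eq fun q => (IsLocalization.lift_eq hψu q).symm
    haveI : IsScalarTower ℂ K B' := IsScalarTower.of_algebraMap_eq fun c => by
      have h2 : algebraMap K B' (algebraMap (Polynomial ℂ) K (algebraMap ℂ (Polynomial ℂ) c))
          = ψ (algebraMap ℂ (Polynomial ℂ) c) := IsLocalization.lift_eq hψu _
      rw [IsScalarTower.algebraMap_apply ℂ (Polynomial ℂ) K c, h2]
      show algebraMap ℂ B' c = algebraMap B B' (φ (algebraMap ℂ (Polynomial ℂ) c))
      rw [AlgHom.commutes, ← IsScalarTower.algebraMap_apply]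
    haveI hft : Algebra.FiniteType K B' := by
      obtain ⟨G, hG⟩ := hfg.out
      refine ⟨⟨G.image (algebraMap B B'), ?_⟩⟩
      rw [eq_top_iff]
      rintro z -
      obtain ⟨⟨v, s⟩, hvs⟩ := IsLocalization.mk'_surjective S z
      rw [← show IsLocalization.mk' B' v s = z from hvs, IsLocalization.mk'_eq_mul_mk'_one]
      apply mul_mem
      · have hv : algebraMap B B' v ∈
            (Algebra.adjoin ℂ (G : Set B)).map (IsScalarTower.toAlgHom ℂ B B') := by
          exact ⟨v, by rw [hG]; trivial, rfl⟩
        rw [AlgHom.map_adjoin] at hv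
        have hsub : Algebra.adjoin ℂ ((IsScalarTower.toAlgHom ℂ B B') '' (G : Set B)) ≤
            (Algebra.adjoin K ((G.image (algebraMap B B') : Finset B') : Set B')).restrictScalars ℂ := by
          apply Algebra.adjoin_le
          intro w hw
          apply Algebra.subset_adjoin
          simpa using hw
        exact hsub hv
      · -- mk' 1 s is in the image of K
        obtain ⟨s₀, hs₀, hs₀eq⟩ := s.2
        have hs₀ne : algebraMap (Polynomial ℂ) K s₀ ≠ 0 := by
          simpa using (IsFractionRing.to_map_eq_zero_iff (K := K)).not.mpr
            (mem_nonZeroDivisors_iff_ne_zero.mp hs₀)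
        have hu : algebraMap B B' (s : B) ≠ 0 :=
          fun h => mem_nonZeroDivisors_iff_ne_zero.mp (hSle s.2) (hinj (h.trans (map_zero _).symm))
        have h1 : IsLocalization.mk' B' (1 : B) s * algebraMap B B' (s : B) = 1 := by
          rw [mul_comm, IsLocalization.mul_mk'_eq_mk'_of_mul]
          simpa using IsLocalization.mk'_self B' (show (s : B) ∈ S from s.2)
        have h2 : χ ((algebraMap (Polynomial ℂ) K s₀)⁻¹) * algebraMap B B' (s : B) = 1 := by
          rw [← hs₀eq]
          show χ ((algebraMap (Polynomial ℂ) K s₀)⁻¹) * ψ s₀ = 1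
          rw [← IsLocalization.lift_eq (S := K) hψu s₀, ← map_mul, inv_mul_cancel₀ hs₀ne, map_one]
        have : IsLocalization.mk' B' (1 : B) s = χ ((algebraMap (Polynomial ℂ) K s₀)⁻¹) :=
          mul_right_cancel₀ hu (h1.trans h2.symm)
        rw [this]
        exact Subalgebra.algebraMap_mem _ _
    haveI : Module.Finite K B' := finite_of_finite_type_of_isJacobsonRing K B'
    haveI : Algebra.IsIntegral K B' := Algebra.IsIntegral.of_finite K B'
    have halg : IsAlgebraic K (algebraMap B B' y) :=
      (Algebra.IsIntegral.isIntegral (R := K) (algebraMap B B' y)).isAlgebraic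
    have halg' : IsAlgebraic (Polynomial ℂ) (algebraMap B B' y) :=
      (IsFractionRing.isAlgebraic_iff (Polynomial ℂ) K B').mpr halg
    obtain ⟨p, hp0, hpev⟩ := halg'
    have : algebraMap B B' (eval₂ φ.toRingHom y p) = 0 := by
      rw [Polynomial.hom_eval₂]
      exact hpev
    exact hind p hp0 (hinj (this.trans (map_zero _).symm))
  -- extract the chain
  obtain ⟨p', hp'ne, hp'prime⟩ := Ring.not_isField_iff_exists_prime.mp hnf
  set Q1 : Ideal B := p'.comap (algebraMap B B') with hQ1
  haveI hQ1prime : Q1.IsPrime := hp'prime.comap _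
  have hQ1S : ∀ s ∈ S, s ∉ Q1 := by
    intro s hs hmem
    exact hp'prime.ne_top (p'.eq_top_of_isUnit_mem hmem (IsLocalization.map_units B' ⟨s, hs⟩))
  have hQ1bot : ⊥ < Q1 := by
    rcases Submodule.exists_mem_ne_zero_of_ne_bot hp'ne with ⟨u, hu, hu0⟩
    obtain ⟨⟨v, s⟩, hvs⟩ := IsLocalization.surj S u
    have hv : v ∈ Q1 := by
      show algebraMap B B' v ∈ p'
      rw [← hvs]
      exact p'.mul_mem_right _ hu
    have hv0 : v ≠ 0 := by
      rintro rfl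
      rw [map_zero] at hvs
      rcases mul_eq_zero.mp hvs with h | h
      · exact hu0 h
      · exact mem_nonZeroDivisors_iff_ne_zero.mp (hSle s.2)
          (hinj (h.trans (map_zero _).symm))
    exact bot_lt_iff_ne_bot.mpr fun h => hv0 (by simpa [h] using hv)
  have hQ1nmax : ¬ Q1.IsMaximal := by
    intro hmax
    haveI := hmax
    haveI : Algebra.FiniteType ℂ (B ⧸ Q1) :=
      hfg.of_surjective (Ideal.Quotient.mkₐ ℂ Q1)
        (Ideal.Quotient.mkₐ_surjective ℂ _)
    letI : Field (B ⧸ Q1) := Ideal.Quotient.field Q1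
    haveI : Module.Finite ℂ (B ⧸ Q1) := finite_of_finite_type_of_isJacobsonRing ℂ _
    haveI : Algebra.IsIntegral ℂ (B ⧸ Q1) := Algebra.IsIntegral.of_finite ℂ _
    obtain ⟨q, hqmonic, hqev⟩ :=
      Algebra.IsIntegral.isIntegral (R := ℂ) (Ideal.Quotient.mk Q1 x)
    have hmem : φ q ∈ Q1 := by
      rw [← Ideal.Quotient.eq_zero_iff_mem]
      have : Ideal.Quotient.mk Q1 (φ q) = aeval (Ideal.Quotient.mk Q1 x) q :=
        (Polynomial.aeval_algHom_apply (Ideal.Quotient.mkₐ ℂ Q1) x q).symm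
      rw [this, Polynomial.aeval_def]
      exact hqev
    exact hQ1S (φ q) ⟨q, mem_nonZeroDivisors_of_ne_zero hqmonic.ne_zero, rfl⟩ hmem
  obtain ⟨Q2, hQ2max, hle⟩ := Ideal.exists_le_maximal Q1 hQ1prime.ne_top
  exact ⟨Q1, Q2, hQ1prime, hQ2max.isPrime, hQ1bot,
    lt_of_le_of_ne hle fun h => hQ1nmax (h ▸ hQ2max)⟩

lemma chain'_pmap_lemma {α β : Type*} {r : α → α → Prop} {s : β → β → Prop} {p : α → Prop}
    (f : ∀ a, p a → β) {l : List α} (H : ∀ a ∈ l, p a) (hl : l.IsChain r)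
    (hf : ∀ a ha b hb, r a b → s (f a ha) (f b hb)) : (l.pmap f H).IsChain s := by
  induction l with
  | nil => simp
  | cons a t ih =>
    cases t with
    | nil => simp
    | cons b u =>
      rw [List.pmap, List.pmap, List.isChain_cons_cons]
      rw [List.isChain_cons_cons] at hl
      constructor
      · exact hf _ _ _ _ hl.1
      · exact ih (fun a ha => H a (List.mem_cons_of_mem _ ha)) hl.2

lemma exists_list_of_le_chainHeight {α : Type*} [PartialOrder α] {s : Set α} (n : ℕ)
    (h : (n : ℕ∞) ≤ s.chainHeight (· < ·)) :
    ∃ l : List α, (l.IsChain (· < ·) ∧ ∀ q ∈ l, q ∈ s) ∧ l.length = n := by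
  obtain ⟨t, hts, htn, htc⟩ := Set.exists_isChain_of_le_chainHeight n h
  have aux : ∀ n : ℕ, ∀ t : Set α, t.encard = n → IsChain (· < ·) t →
      ∃ l : List α, (l.IsChain (· < ·) ∧ ∀ q ∈ l, q ∈ t) ∧ l.length = n := by
    intro n
    induction n with
    | zero => intro t _ _; exact ⟨[], by simp⟩
    | succ n ih =>
      intro t ht hc
      have hfin : t.Finite := Set.finite_of_encard_eq_coe ht
      have hne : t.Nonempty := by
        rw [← Set.encard_pos, ht]; exact_mod_cast Nat.succ_pos n
      obtain ⟨m, hm⟩ := hfin.exists_maximal hne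
      have ht' : (t \ {m}).encard = n := by
        have := Set.encard_diff_singleton_add_one hm.1
        rw [ht] at this
        push_cast at this
        exact WithTop.add_right_cancel ENat.one_ne_top this
      obtain ⟨l, ⟨hl1, hl2⟩, hl3⟩ := ih (t \ {m}) ht' (hc.mono Set.diff_subset)
      refine ⟨l ++ [m], ⟨?_, ?_⟩, by simp [hl3]⟩
      · rw [List.isChain_append]
        refine ⟨hl1, List.isChain_singleton _, ?_⟩
        intro x hx y hy
        rw [List.head?_cons, Option.mem_some_iff] at hy
        subst hy
        have hxt := hl2 x (List.mem_of_mem_getLast? hx)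
        rcases hc hxt.1 hm.1 (fun e => hxt.2 (by simp [e])) with h | h
        · exact h
        · exact (lt_irrefl m (h.trans_le (hm.2 hxt.1 h.le))).elim
      · intro q hq
        rcases List.mem_append.mp hq with h | h
        · exact (hl2 q h).1
        · rw [List.mem_singleton] at h
          exact h ▸ hm.1
  obtain ⟨l, ⟨hl1, hl2⟩, hl3⟩ := aux n t htn htc
  exact ⟨l, ⟨hl1, fun q hq => hts (hl2 q hq)⟩, hl3⟩

/-- Let `A` be a complex affine Poisson algebra of Krull dimension `d`
whose Poisson bracket is not identically zero.  Then every Poisson prime ideal of height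
at least `d - 1` contains `{a, b}` for all `a, b ∈ A`; in particular the intersection of
all Poisson prime ideals of height at least `d - 1` is a nonzero ideal. -/
theorem poisson_primes_of_large_height
    (A : Type*) [CommRing A] [IsDomain A] [Algebra ℂ A]
    (hfg : Algebra.FiniteType ℂ A) (pb : PoissonBracket ℂ A)
    (d : ℕ) (hdim : ringKrullDim A = d)
    (hnontriv : ∃ a b : A, pb.br a b ≠ 0) :
    (∀ P : Ideal A, P.IsPrime → pb.IsPoissonIdeal P →
        ((d - 1 : ℕ) : ℕ∞) ≤ idealHeight P → ∀ a b : A, pb.br a b ∈ P) ∧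
      sInf {P : Ideal A | P.IsPrime ∧ pb.IsPoissonIdeal P ∧
        ((d - 1 : ℕ) : ℕ∞) ≤ idealHeight P} ≠ ⊥ := by
  classical
  have main : ∀ P : Ideal A, P.IsPrime → pb.IsPoissonIdeal P →
      ((d - 1 : ℕ) : ℕ∞) ≤ idealHeight P → ∀ a b : A, pb.br a b ∈ P := by
    intro P hP hpi hht a b
    by_contra hab
    by_cases hdep : ∃ p : Polynomial (Polynomial ℂ), p ≠ 0 ∧
        eval₂ (aeval a : Polynomial ℂ →ₐ[ℂ] A).toRingHom b p ∈ P
    · obtain ⟨p, hp0, hmem⟩ := hdep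
      exact two_var pb P hP hpi a b hab p.natDegree p le_rfl hp0 hmem
    push_neg at hdep
    haveI := hP
    set B := A ⧸ P with hB
    haveI : IsDomain B := Ideal.Quotient.isDomain P
    have hfgB : Algebra.FiniteType ℂ B :=
      hfg.of_surjective (Ideal.Quotient.mkₐ ℂ P)
        (Ideal.Quotient.mkₐ_surjective ℂ _)
    set x : B := Ideal.Quotient.mk P a with hx
    set y : B := Ideal.Quotient.mk P b with hy
    have hcomm : (Ideal.Quotient.mk P).comp (aeval a : Polynomial ℂ →ₐ[ℂ] A).toRingHom
        = (aeval x : Polynomial ℂ →ₐ[ℂ] B).toRingHom := by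
      apply Polynomial.ringHom_ext
      · intro r
        simp only [RingHom.coe_comp, Function.comp_apply, AlgHom.toRingHom_eq_coe,
          RingHom.coe_coe, aeval_C]
        exact (Ideal.Quotient.mkₐ ℂ P).commutes r
      · simp [hx]
    have hind : ∀ p : Polynomial (Polynomial ℂ), p ≠ 0 →
        eval₂ (aeval x : Polynomial ℂ →ₐ[ℂ] B).toRingHom y p ≠ 0 := by
      intro p hp0 h0
      apply hdep p hp0
      rw [← Ideal.Quotient.eq_zero_iff_mem]
      rw [Polynomial.hom_eval₂, hcomm]
      exact h0
    obtain ⟨Q1, Q2, hQ1p, hQ2p, hbot, hlt12⟩ := exists_chain_of_indep hfgB x y hind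
    set Q1' : Ideal A := Q1.comap (Ideal.Quotient.mk P) with hQ1'
    set Q2' : Ideal A := Q2.comap (Ideal.Quotient.mk P) with hQ2'
    haveI hQ1'p : Q1'.IsPrime := hQ1p.comap _
    haveI hQ2'p : Q2'.IsPrime := hQ2p.comap _
    have hPQ1 : P < Q1' := by
      refine lt_of_le_of_ne (fun z hz => ?_) (fun h => ?_)
      · show Ideal.Quotient.mk P z ∈ Q1
        rw [Ideal.Quotient.eq_zero_iff_mem.mpr hz]
        exact Q1.zero_mem
      · obtain ⟨u, hu, hu0⟩ := Submodule.exists_mem_ne_zero_of_ne_bot hbot.ne'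
        obtain ⟨v, rfl⟩ := Ideal.Quotient.mk_surjective u
        have : v ∈ Q1' := hu
        rw [← h] at this
        exact hu0 (Ideal.Quotient.eq_zero_iff_mem.mpr this)
    have hQ12 : Q1' < Q2' := by
      refine lt_of_le_of_ne (Ideal.comap_mono hlt12.le) (fun h => ?_)
      obtain ⟨u, hu2, hu1⟩ := SetLike.exists_of_lt hlt12
      obtain ⟨v, rfl⟩ := Ideal.Quotient.mk_surjective u
      have : v ∈ Q2' := hu2
      rw [← h] at this
      exact hu1 this
    -- build a long chain of primes
    obtain ⟨l, hlsub, hlen⟩ := exists_list_of_le_chainHeight (d - 1) hht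
    set L : List (Ideal A) := l ++ [P, Q1', Q2'] with hL
    have hchain : L.IsChain (· < ·) := by
      rw [List.isChain_append]
      refine ⟨hlsub.1, ?_, ?_⟩
      · exact List.isChain_cons_cons.mpr ⟨hPQ1, List.isChain_cons_cons.mpr ⟨hQ12, List.isChain_singleton _⟩⟩
      · intro q hq p' hp'
        have hq' : q ∈ l := by
          obtain ⟨hne, heq⟩ := List.mem_getLast?_eq_getLast hq
          exact heq ▸ List.getLast_mem hne
        have : p' = P := by simpa using hp'.symm
        exact this ▸ (hlsub.2 q hq').2
    have hallprime : ∀ Q ∈ L, Q.IsPrime := by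
      intro Q hQ
      rcases List.mem_append.mp hQ with h | h
      · exact (hlsub.2 Q h).1
      · simp only [List.mem_cons, List.mem_singleton] at h
        rcases h with rfl | rfl | rfl | h
        · exact hP
        · exact hQ1'p
        · exact hQ2'p
        · exact absurd h List.not_mem_nil
    set L' : List (PrimeSpectrum A) := L.pmap (fun Q h => ⟨Q, h⟩) hallprime with hL'
    have hchain' : L'.IsChain (· < ·) :=
      chain'_pmap_lemma _ hallprime hchain
        (fun a ha b hb h => (PrimeSpectrum.asIdeal_lt_asIdeal _ _).mp h)
    have hne : L' ≠ [] := by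
      simp [hL', hL]
    set series : LTSeries (PrimeSpectrum A) := RelSeries.fromListIsChain L' hne hchain' with hseries
    have hlenL : L'.length = (d - 1) + 3 := by
      simp [hL', hL, hlen]
    have hlen' : series.length = (d - 1) + 2 := by
      simp [hseries, RelSeries.fromListIsChain, hlenL]
    have hk := Order.LTSeries.length_le_krullDim series
    rw [show Order.krullDim (PrimeSpectrum A) = ringKrullDim A from rfl, hdim, hlen'] at hk
    have : (d - 1) + 2 ≤ d := by exact_mod_cast hk
    omega
  refine ⟨main, fun hbot => ?_⟩
  obtain ⟨a, b, hab⟩ := hnontriv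
  have hmem : pb.br a b ∈ sInf {P : Ideal A | P.IsPrime ∧ pb.IsPoissonIdeal P ∧
      ((d - 1 : ℕ) : ℕ∞) ≤ idealHeight P} :=
    Submodule.mem_sInf.mpr fun P hPm => main P hPm.1 hPm.2.1 hPm.2.2 a b
  rw [hbot] at hmem
  exact hab (Ideal.mem_bot.mp hmem)
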